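/- The equation w² = −25·x⁴ − 5·y⁴ + 45·z⁴ has no solution (w, x, y, z) ∈ ℚ⁴ with (x, y, z) ≠ (0, 0, 0). -/

import Mathlib

set_option maxHeartbeats 1000000

/- ### Auxiliary decidable congruence facts -/

private lemma zmod5_lemma : ∀ Y Z : ZMod 5, 9 * Z ^ 4 - Y ^ 4 = 0 → Y = 0 ∧ Z = 0 := by decide

private lemma zmod16_odd4 : ∀ t : ZMod 16, (2 * t + 1) ^ 4 = 1 := by decide

private lemma zmod16_lhs8 : ∀ v x : ZMod 16, v ^ 2 + x ^ 4 ≠ 8 := by decide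

private lemma zmod16_lhs3 : ∀ v x : ZMod 16, v ^ 2 + x ^ 4 ≠ 3 := by decide

private lemma zmod16_sq15 : ∀ v : ZMod 16, v ^ 2 ≠ 15 := by decide

private lemma zmod16_sq5 : ∀ v : ZMod 16, v ^ 2 ≠ 5 := by decide

private lemma zmod3_lemma : ∀ V X : ZMod 3, V ^ 2 + X ^ 4 = 0 → V = 0 ∧ X = 0 := by decide

private lemma zmod3_lemma2 : ∀ V C : ZMod 3, V ^ 2 = 2 * C ^ 4 → C = 0 := by decide

/- ### Primes `p ≡ 3 mod 4` divide sums of two squares completely -/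

private lemma dvd_of_dvd_sq_add_sq {p : ℕ} (hp : p.Prime) (hp4 : p % 4 = 3) (a b : ℤ)
    (h : (p : ℤ) ∣ a ^ 2 + b ^ 2) : (p : ℤ) ∣ a ∧ (p : ℤ) ∣ b := by
  haveI : Fact p.Prime := ⟨hp⟩
  have h0 : ((a ^ 2 + b ^ 2 : ℤ) : ZMod p) = 0 := by
    rw [ZMod.intCast_zmod_eq_zero_iff_dvd]; exact_mod_cast h
  push_cast at h0
  by_cases hb : (b : ZMod p) = 0
  · have ha : (a : ZMod p) = 0 := by
      have h1 : (a : ZMod p) ^ 2 = 0 := by rw [hb] at h0; linear_combination h0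
      exact pow_eq_zero_iff (two_ne_zero) |>.mp h1
    constructor
    · rwa [← ZMod.intCast_zmod_eq_zero_iff_dvd]
    · rwa [← ZMod.intCast_zmod_eq_zero_iff_dvd]
  · exfalso
    have hsq : IsSquare (-1 : ZMod p) := by
      refine ⟨(a : ZMod p) * (b : ZMod p)⁻¹, ?_⟩
      field_simp
      linear_combination -h0
    exact (ZMod.exists_sq_eq_neg_one_iff.mp hsq) hp4

/-- Even multiplicity of `p ≡ 3 mod 4` in a sum of two squares. -/
private lemma even_factorization_sq_add_sq {p : ℕ} (hp : p.Prime) (hp4 : p % 4 = 3) (a b : ℤ) :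
    Even ((a ^ 2 + b ^ 2).natAbs.factorization p) := by
  have h2 : ((a.natAbs ^ 2 + b.natAbs ^ 2 : ℕ) : ℤ) = a ^ 2 + b ^ 2 := by
    push_cast [Int.natCast_natAbs]
    rw [sq_abs, sq_abs]
  have h : (a ^ 2 + b ^ 2).natAbs = a.natAbs ^ 2 + b.natAbs ^ 2 := by
    rw [← h2, Int.natAbs_natCast]
  rw [h, Nat.factorization_def _ hp]
  by_cases hq : p ∈ (a.natAbs ^ 2 + b.natAbs ^ 2).primeFactors
  · exact Nat.eq_sq_add_sq_iff.mp ⟨a.natAbs, b.natAbs, rfl⟩ p hq hp4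
  · have h0 : (a.natAbs ^ 2 + b.natAbs ^ 2).factorization p = 0 :=
      Finsupp.notMem_support_iff.mp (by rwa [Nat.support_factorization])
    rw [← Nat.factorization_def _ hp, h0]
    exact Even.zero

/- ### n ≡ 3 mod 4 has a prime divisor ≡ 3 mod 4 (with odd multiplicity) -/

private lemma exists_prime_three_mod_four_dvd :
    ∀ n : ℕ, n % 4 = 3 → ∃ p, p.Prime ∧ p % 4 = 3 ∧ p ∣ n := by
  intro n
  induction n using Nat.strong_induction_on with
  | _ n IH =>
    intro h3
    have hn1 : n ≠ 1 := by omega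
    have hn0 : n ≠ 0 := by omega
    have hqp : n.minFac.Prime := Nat.minFac_prime hn1
    have hqd : n.minFac ∣ n := Nat.minFac_dvd n
    have hq2 : n.minFac ≠ 2 := by
      rintro h2
      rw [h2] at hqd
      obtain ⟨k, hk⟩ := hqd
      omega
    have hqodd : n.minFac % 2 = 1 := Nat.odd_iff.mp (hqp.odd_of_ne_two hq2)
    have hq4 : n.minFac % 4 = 1 ∨ n.minFac % 4 = 3 := by omega
    rcases hq4 with h1 | h3'
    · obtain ⟨m, hm⟩ := hqd
      have hm0 : m ≠ 0 := by rintro rfl; simp at hm; exact hn0 hm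
      have hm4 : m % 4 = 3 := by
        have hmm := Nat.mul_mod n.minFac m 4
        rw [← hm, h1, one_mul, Nat.mod_mod_of_dvd] at hmm
        · omega
        · exact dvd_refl 4
      have hmlt : m < n := by
        have h2q : 2 ≤ n.minFac := hqp.two_le
        have : 2 * m ≤ n.minFac * m := Nat.mul_le_mul_right m h2q
        omega
      obtain ⟨p, pp, p4, pd⟩ := IH m hmlt hm4
      refine ⟨p, pp, p4, pd.trans ⟨n.minFac, ?_⟩⟩
      conv_lhs => rw [hm]
      ring
    · exact ⟨n.minFac, hqp, h3', hqd⟩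

private lemma exists_odd_multiplicity :
    ∀ n : ℕ, n % 4 = 3 → ∃ p, p.Prime ∧ p % 4 = 3 ∧ Odd (n.factorization p) := by
  intro n
  induction n using Nat.strong_induction_on with
  | _ n IH =>
    intro h3
    have hn0 : n ≠ 0 := by omega
    obtain ⟨p, pp, p4, pd⟩ := exists_prime_three_mod_four_dvd n h3
    by_cases hodd : Odd (n.factorization p)
    · exact ⟨p, pp, p4, hodd⟩
    · have heven : Even (n.factorization p) := Nat.not_odd_iff_even.mp hodd
      set e := n.factorization p with he
      set m := ordCompl[p] n with hm
      have key : p ^ e * m = n := Nat.ordProj_mul_ordCompl_eq_self n p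
      have hpm : ¬ p ∣ m := Nat.not_dvd_ordCompl pp hn0
      have hm0 : m ≠ 0 := by
        rintro h0
        rw [h0, mul_zero] at key
        exact hn0 key.symm
      have hpe4 : p ^ e % 4 = 1 := by
        obtain ⟨k, hk⟩ := heven
        have : p ^ e = (p ^ 2) ^ k := by rw [← pow_mul]; congr 1; omega
        rw [this, Nat.pow_mod, Nat.pow_mod p 2 4, p4]
        norm_num
      have hm4 : m % 4 = 3 := by
        have hmm := Nat.mul_mod (p ^ e) m 4
        rw [key, hpe4, one_mul, Nat.mod_mod_of_dvd] at hmm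
        · omega
        · exact dvd_refl 4
      have hmlt : m < n := by
        have he1 : 1 ≤ e := pp.factorization_pos_of_dvd hn0 pd
        have he2 : 2 ≤ e := by
          rcases heven with ⟨k, hk⟩; omega
        have h4 : 4 ≤ p ^ e := by
          calc 4 = 2 ^ 2 := by norm_num
          _ ≤ p ^ 2 := Nat.pow_le_pow_left pp.two_le 2
          _ ≤ p ^ e := Nat.pow_le_pow_right pp.pos he2
        have : 4 * m ≤ p ^ e * m := Nat.mul_le_mul_right m h4
        omega
      obtain ⟨q, qq, q4, qodd⟩ := IH m hmlt hm4
      have hqd : q ∣ m := by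
        by_contra hq
        rw [Nat.factorization_eq_zero_of_not_dvd hq] at qodd
        simpa using qodd
      have hqp' : q ≠ p := by
        rintro rfl
        exact hpm hqd
      refine ⟨q, qq, q4, ?_⟩
      have hfq : n.factorization q = m.factorization q := by
        rw [← key, Nat.factorization_mul (pow_ne_zero _ pp.pos.ne') hm0]
        rw [Finsupp.add_apply, Nat.Prime.factorization_pow pp]
        rw [Finsupp.single_apply]
        simp [hqp'.symm]
      rwa [hfq]

/- ### Key descent lemma: even multiplicity of p ≡ 3 mod 4, p ≠ 3 in 3c²+b² -/

private lemma keyK {p : ℕ} (hp : p.Prime) (hp4 : p % 4 = 3) (hp3 : p ≠ 3) :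
    ∀ n : ℕ, ∀ v x b c : ℤ, x ≠ 0 → v ^ 2 + x ^ 4 = 125 * (9 * c ^ 4 - b ^ 4) →
      (3 * c ^ 2 + b ^ 2).natAbs = n → Even (n.factorization p) := by
  intro n
  induction n using Nat.strong_induction_on with
  | _ n IH =>
    intro v x b c hx heq hn
    have hp2 : p ≠ 2 := by rintro rfl; simp at hp4
    have hp5 : p ≠ 5 := by rintro rfl; simp at hp4
    have hpZ : Prime (p : ℤ) := Nat.prime_iff_prime_int.mp hp
    have hN : (0 : ℤ) < v ^ 2 + x ^ 4 := by positivity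
    have hQP : v ^ 2 + x ^ 4 = 125 * ((3 * c ^ 2 - b ^ 2) * (3 * c ^ 2 + b ^ 2)) := by
      linear_combination heq
    have hprod : (3 * c ^ 2 - b ^ 2) * (3 * c ^ 2 + b ^ 2) ≠ 0 := by
      intro h0
      rw [h0, mul_zero] at hQP
      exact hN.ne' hQP
    have hPne : 3 * c ^ 2 - b ^ 2 ≠ 0 := fun h => hprod (by rw [h, zero_mul])
    have hQne : 3 * c ^ 2 + b ^ 2 ≠ 0 := fun h => hprod (by rw [h, mul_zero])
    by_cases hdvdQ : (p : ℤ) ∣ 3 * c ^ 2 + b ^ 2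
    · by_cases hdvdP : (p : ℤ) ∣ 3 * c ^ 2 - b ^ 2
      · -- descent case: p ∣ b, p ∣ c
        have hdb : (p : ℤ) ∣ b := by
          have h2b : (p : ℤ) ∣ 2 * b ^ 2 := by
            have := dvd_sub hdvdQ hdvdP
            have heq2 : 3 * c ^ 2 + b ^ 2 - (3 * c ^ 2 - b ^ 2) = 2 * b ^ 2 := by ring
            rwa [heq2] at this
          rcases hpZ.dvd_mul.mp h2b with h | h
          · exfalso
            have hd2 : p ∣ 2 := by exact_mod_cast h
            exact hp2 ((Nat.prime_dvd_prime_iff_eq hp Nat.prime_two).mp hd2)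
          · exact hpZ.dvd_of_dvd_pow h
        have hdc : (p : ℤ) ∣ c := by
          have h6c : (p : ℤ) ∣ 2 * 3 * c ^ 2 := by
            have := dvd_add hdvdQ hdvdP
            have heq2 : 3 * c ^ 2 + b ^ 2 + (3 * c ^ 2 - b ^ 2) = 2 * 3 * c ^ 2 := by ring
            rwa [heq2] at this
          rcases hpZ.dvd_mul.mp h6c with h | h
          · exfalso
            rcases hpZ.dvd_mul.mp h with h1 | h1
            · have hd2 : p ∣ 2 := by exact_mod_cast h1
              exact hp2 ((Nat.prime_dvd_prime_iff_eq hp Nat.prime_two).mp hd2)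
            · have hd3 : p ∣ 3 := by exact_mod_cast h1
              exact hp3 ((Nat.prime_dvd_prime_iff_eq hp Nat.prime_three).mp hd3)
          · exact hpZ.dvd_of_dvd_pow h
        obtain ⟨b₁, rfl⟩ := hdb
        obtain ⟨c₁, rfl⟩ := hdc
        -- p ∣ v and p ∣ x
        have hdN : (p : ℤ) ∣ v ^ 2 + (x ^ 2) ^ 2 := by
          have : (p : ℤ) ∣ v ^ 2 + x ^ 4 := by
            rw [hQP]
            exact Dvd.dvd.mul_left (Dvd.dvd.mul_left hdvdQ _) _
          have hxx : v ^ 2 + x ^ 4 = v ^ 2 + (x ^ 2) ^ 2 := by ring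
          rwa [hxx] at this
        obtain ⟨hdv, hdx2⟩ := dvd_of_dvd_sq_add_sq hp hp4 v (x ^ 2) hdN
        have hdx : (p : ℤ) ∣ x := hpZ.dvd_of_dvd_pow hdx2
        obtain ⟨v₁, rfl⟩ := hdv
        obtain ⟨x₁, rfl⟩ := hdx
        have hp0 : (p : ℤ) ≠ 0 := by exact_mod_cast hp.pos.ne'
        -- cancel p²
        have step1 : v₁ ^ 2 + (p : ℤ) ^ 2 * x₁ ^ 4 = 125 * (p : ℤ) ^ 2 * (9 * c₁ ^ 4 - b₁ ^ 4) := by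
          have h2 : (p : ℤ) ^ 2 * (v₁ ^ 2 + (p : ℤ) ^ 2 * x₁ ^ 4) =
              (p : ℤ) ^ 2 * (125 * (p : ℤ) ^ 2 * (9 * c₁ ^ 4 - b₁ ^ 4)) := by
            linear_combination heq
          exact mul_left_cancel₀ (pow_ne_zero 2 hp0) h2
        have hdv₁ : (p : ℤ) ∣ v₁ := by
          apply hpZ.dvd_of_dvd_pow (n := 2)
          have : v₁ ^ 2 = (p : ℤ) ^ 2 * (125 * (9 * c₁ ^ 4 - b₁ ^ 4) - x₁ ^ 4) := by
            linear_combination step1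
          rw [this]
          exact Dvd.dvd.mul_right (dvd_pow_self _ two_ne_zero) _
        obtain ⟨v₂, rfl⟩ := hdv₁
        have heq' : v₂ ^ 2 + x₁ ^ 4 = 125 * (9 * c₁ ^ 4 - b₁ ^ 4) := by
          have h2 : (p : ℤ) ^ 2 * (v₂ ^ 2 + x₁ ^ 4) =
              (p : ℤ) ^ 2 * (125 * (9 * c₁ ^ 4 - b₁ ^ 4)) := by
            linear_combination step1
          exact mul_left_cancel₀ (pow_ne_zero 2 hp0) h2
        have hx₁ : x₁ ≠ 0 := by
          rintro rfl; simp at hx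
        -- n = p² * n₁
        have hQfact : 3 * ((p : ℤ) * c₁) ^ 2 + ((p : ℤ) * b₁) ^ 2 =
            (p : ℤ) ^ 2 * (3 * c₁ ^ 2 + b₁ ^ 2) := by ring
        set n₁ := (3 * c₁ ^ 2 + b₁ ^ 2).natAbs with hn₁
        have hnval : n = p ^ 2 * n₁ := by
          rw [← hn, hQfact, Int.natAbs_mul, Int.natAbs_pow, Int.natAbs_natCast]
        have hn₁ne : n₁ ≠ 0 := by
          rw [hn₁]
          simp only [ne_eq, Int.natAbs_eq_zero]
          intro h0
          rw [hQfact, h0, mul_zero] at hQne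
          exact hQne rfl
        have hn₁lt : n₁ < n := by
          have h1 : 1 ≤ n₁ := Nat.one_le_iff_ne_zero.mpr hn₁ne
          have h4 : 4 ≤ p ^ 2 := by nlinarith [hp.two_le]
          calc n₁ < 4 * n₁ := by omega
          _ ≤ p ^ 2 * n₁ := Nat.mul_le_mul_right n₁ h4
          _ = n := hnval.symm
        have := IH n₁ hn₁lt v₂ x₁ b₁ c₁ hx₁ heq' rfl
        rw [hnval, Nat.factorization_mul (pow_ne_zero _ hp.pos.ne') hn₁ne,
          Finsupp.add_apply, Nat.Prime.factorization_pow hp, Finsupp.single_eq_same]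
        obtain ⟨k, hk⟩ := this
        exact ⟨k + 1, by omega⟩
      · -- p ∤ P : multiplicity of p in Q equals that in N, which is even
        have hP0 : (3 * c ^ 2 - b ^ 2).natAbs ≠ 0 := Int.natAbs_ne_zero.mpr hPne
        have hQ0 : (3 * c ^ 2 + b ^ 2).natAbs ≠ 0 := Int.natAbs_ne_zero.mpr hQne
        have hNfact : (v ^ 2 + x ^ 4).natAbs =
            125 * (3 * c ^ 2 - b ^ 2).natAbs * (3 * c ^ 2 + b ^ 2).natAbs := by
          rw [hQP, Int.natAbs_mul, Int.natAbs_mul]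
          norm_num [mul_assoc]
        have hEvenN : Even ((v ^ 2 + x ^ 4).natAbs.factorization p) := by
          have hxx : v ^ 2 + x ^ 4 = v ^ 2 + (x ^ 2) ^ 2 := by ring
          rw [hxx]
          exact even_factorization_sq_add_sq hp hp4 v (x ^ 2)
        rw [hNfact, Nat.factorization_mul (Nat.mul_ne_zero (by norm_num) hP0) hQ0,
          Nat.factorization_mul (by norm_num : (125 : ℕ) ≠ 0) hP0] at hEvenN
        have h125 : (125 : ℕ).factorization p = 0 := by
          apply Nat.factorization_eq_zero_of_not_dvd
          intro hd
          have : p ∣ 5 ^ 3 := by norm_num at hd ⊢; exact hd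
          have := hp.dvd_of_dvd_pow this
          have := (Nat.prime_dvd_prime_iff_eq hp (by norm_num)).mp this
          exact hp5 this
        have hPfact : (3 * c ^ 2 - b ^ 2).natAbs.factorization p = 0 := by
          apply Nat.factorization_eq_zero_of_not_dvd
          intro hd
          exact hdvdP (Int.dvd_natAbs.mp (Int.natCast_dvd_natCast.mpr hd))
        simp only [Finsupp.add_apply, h125, hPfact, zero_add] at hEvenN
        rwa [hn] at hEvenN
    · -- p ∤ Q
      rw [← hn]
      rw [Nat.factorization_eq_zero_of_not_dvd]
      · exact Even.zero
      · intro hd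
        exact hdvdQ (Int.dvd_natAbs.mp (Int.natCast_dvd_natCast.mpr hd))

/- ### Descent helper for the main equation -/

private lemma descend_w {q w x y z x₁ y₁ z₁ : ℤ} (hq : Prime q)
    (hx : x = q * x₁) (hy : y = q * y₁) (hz : z = q * z₁)
    (heq : w ^ 2 = -25 * x ^ 4 - 5 * y ^ 4 + 45 * z ^ 4) :
    ∃ w₁ : ℤ, w₁ ^ 2 = -25 * x₁ ^ 4 - 5 * y₁ ^ 4 + 45 * z₁ ^ 4 := by
  have hq0 : q ≠ 0 := hq.ne_zero
  have h1 : w ^ 2 = q ^ 4 * (-25 * x₁ ^ 4 - 5 * y₁ ^ 4 + 45 * z₁ ^ 4) := by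
    rw [hx, hy, hz] at heq
    linear_combination heq
  have hqw : q ∣ w := by
    apply hq.dvd_of_dvd_pow (n := 2)
    rw [h1]
    exact Dvd.dvd.mul_right (dvd_pow_self q (by norm_num)) _
  obtain ⟨w', rfl⟩ := hqw
  have h2 : w' ^ 2 = q ^ 2 * (-25 * x₁ ^ 4 - 5 * y₁ ^ 4 + 45 * z₁ ^ 4) := by
    have h3 : q ^ 2 * w' ^ 2 = q ^ 2 * (q ^ 2 * (-25 * x₁ ^ 4 - 5 * y₁ ^ 4 + 45 * z₁ ^ 4)) := by
      linear_combination h1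
    exact mul_left_cancel₀ (pow_ne_zero 2 hq0) h3
  have hqw' : q ∣ w' := by
    apply hq.dvd_of_dvd_pow (n := 2)
    rw [h2]
    exact Dvd.dvd.mul_right (dvd_pow_self q (by norm_num)) _
  obtain ⟨w₁, rfl⟩ := hqw'
  refine ⟨w₁, ?_⟩
  have h3 : q ^ 2 * w₁ ^ 2 = q ^ 2 * (-25 * x₁ ^ 4 - 5 * y₁ ^ 4 + 45 * z₁ ^ 4) := by
    linear_combination h2
  exact mul_left_cancel₀ (pow_ne_zero 2 hq0) h3

/- ### The core integral statement -/

private lemma core : ∀ n : ℕ, ∀ w x y z : ℤ,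
    x.natAbs + y.natAbs + z.natAbs = n →
    w ^ 2 = -25 * x ^ 4 - 5 * y ^ 4 + 45 * z ^ 4 →
    ¬(x = 0 ∧ y = 0 ∧ z = 0) → False := by
  intro n
  induction n using Nat.strong_induction_on with
  | _ n IH =>
    intro w x y z hsum heq hnz
    have h5Z : Prime (5 : ℤ) := by norm_num
    have h2Z : Prime (2 : ℤ) := by norm_num
    have h3Z : Prime (3 : ℤ) := by norm_num
    -- Step 1 : 5 ∣ w
    have hw5 : (5 : ℤ) ∣ w := by
      apply h5Z.dvd_of_dvd_pow (n := 2)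
      exact ⟨-5 * x ^ 4 - y ^ 4 + 9 * z ^ 4, by linear_combination heq⟩
    obtain ⟨v, rfl⟩ := hw5
    have key' : 5 * (v ^ 2 + x ^ 4) = 9 * z ^ 4 - y ^ 4 := by
      have h25 : (5 : ℤ) * (5 * (v ^ 2 + x ^ 4)) = 5 * (9 * z ^ 4 - y ^ 4) := by
        linear_combination heq
      exact mul_left_cancel₀ (by norm_num : (5 : ℤ) ≠ 0) h25
    -- Step 2 : 5 ∣ y, 5 ∣ z
    have hcast5 : (9 : ZMod 5) * (z : ZMod 5) ^ 4 - (y : ZMod 5) ^ 4 = 0 := by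
      have h0 : ((9 * z ^ 4 - y ^ 4 : ℤ) : ZMod 5) = ((5 * (v ^ 2 + x ^ 4) : ℤ) : ZMod 5) := by
        rw [key']
      push_cast at h0
      rw [h0]
      have h5 : (5 : ZMod 5) = 0 := by decide
      rw [h5, zero_mul]
    obtain ⟨hy0, hz0⟩ := zmod5_lemma (y : ZMod 5) (z : ZMod 5) hcast5
    have hy5 : (5 : ℤ) ∣ y := by
      have h := (ZMod.intCast_zmod_eq_zero_iff_dvd y 5).mp hy0
      exact_mod_cast h
    have hz5 : (5 : ℤ) ∣ z := by
      have h := (ZMod.intCast_zmod_eq_zero_iff_dvd z 5).mp hz0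
      exact_mod_cast h
    obtain ⟨b, rfl⟩ := hy5
    obtain ⟨c, rfl⟩ := hz5
    have keyN : v ^ 2 + x ^ 4 = 125 * (9 * c ^ 4 - b ^ 4) := by
      have h5' : (5 : ℤ) * (v ^ 2 + x ^ 4) = 5 * (125 * (9 * c ^ 4 - b ^ 4)) := by
        linear_combination key'
      exact mul_left_cancel₀ (by norm_num : (5 : ℤ) ≠ 0) h5'
    -- Step 3 : if 5 ∣ x, descend
    by_cases h5x : (5 : ℤ) ∣ x
    · obtain ⟨x₁, hx₁⟩ := h5x
      obtain ⟨w₁, heq₁⟩ := descend_w h5Z hx₁ rfl rfl heq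
      have hnz₁ : ¬(x₁ = 0 ∧ b = 0 ∧ c = 0) := by
        rintro ⟨rfl, rfl, rfl⟩
        exact hnz ⟨by omega, by omega, by omega⟩
      apply IH (x₁.natAbs + b.natAbs + c.natAbs) _ w₁ x₁ b c rfl heq₁ hnz₁
      -- measure decreases
      have e1 : x.natAbs = 5 * x₁.natAbs := by rw [hx₁, Int.natAbs_mul]; rfl
      have e2 : (5 * b).natAbs = 5 * b.natAbs := by rw [Int.natAbs_mul]; rfl
      have e3 : (5 * c).natAbs = 5 * c.natAbs := by rw [Int.natAbs_mul]; rfl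
      have hpos : x₁.natAbs + b.natAbs + c.natAbs ≠ 0 := by
        intro h0
        apply hnz₁
        refine ⟨?_, ?_, ?_⟩ <;> rw [← Int.natAbs_eq_zero] <;> omega
      omega
    have hx0 : x ≠ 0 := by rintro rfl; exact h5x ⟨0, by ring⟩
    -- Step 4 : parity analysis mod 16
    have hcast16 : ((v : ZMod 16)) ^ 2 + ((x : ZMod 16)) ^ 4 =
        125 * (9 * ((c : ZMod 16)) ^ 4 - ((b : ZMod 16)) ^ 4) := by
      have h0 := congrArg (fun t : ℤ => (t : ZMod 16)) keyN
      push_cast at h0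
      exact h0
    rcases Int.even_or_odd b with ⟨B, hB⟩ | ⟨B, hB⟩
    · rcases Int.even_or_odd c with ⟨C, hC⟩ | ⟨C, hC⟩
      · -- b, c both even : x must be even, descend by 2
        rcases Int.even_or_odd x with ⟨X, hX⟩ | ⟨X, hX⟩
        · -- descend
          have hx2 : x = 2 * X := by rw [hX]; ring
          have hy2 : 5 * b = 2 * (5 * B) := by rw [hB]; ring
          have hz2 : 5 * c = 2 * (5 * C) := by rw [hC]; ring
          obtain ⟨w₁, heq₁⟩ := descend_w h2Z hx2 hy2 hz2 heq
          have hnz₁ : ¬(X = 0 ∧ 5 * B = 0 ∧ 5 * C = 0) := by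
            rintro ⟨rfl, hB0, hC0⟩
            have hB' : B = 0 := by omega
            have hC' : C = 0 := by omega
            exact hnz ⟨by omega, by omega, by omega⟩
          apply IH (X.natAbs + (5 * B).natAbs + (5 * C).natAbs) _ w₁ X (5 * B) (5 * C) rfl heq₁ hnz₁
          have e1 : x.natAbs = 2 * X.natAbs := by rw [hx2, Int.natAbs_mul]; rfl
          have e2 : (5 * b).natAbs = 2 * (5 * B).natAbs := by rw [hy2, Int.natAbs_mul]; rfl
          have e3 : (5 * c).natAbs = 2 * (5 * C).natAbs := by rw [hz2, Int.natAbs_mul]; rfl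
          have hpos : X.natAbs + (5 * B).natAbs + (5 * C).natAbs ≠ 0 := by
            intro h0
            apply hnz₁
            refine ⟨?_, ?_, ?_⟩ <;> rw [← Int.natAbs_eq_zero] <;> omega
          omega
        · -- x odd : contradiction mod 16
          exfalso
          have hbx : (b : ZMod 16) = 2 * (B : ZMod 16) := by
            rw [hB]; push_cast; ring
          have hcx : (c : ZMod 16) = 2 * (C : ZMod 16) := by
            rw [hC]; push_cast; ring
          have hxx : (x : ZMod 16) = 2 * (X : ZMod 16) + 1 := by
            rw [hX]; push_cast; ring
          rw [hbx, hcx, hxx] at hcast16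
          have hb4 : (2 * (B : ZMod 16)) ^ 4 = 16 * (B : ZMod 16) ^ 4 := by ring
          have hc4 : (2 * (C : ZMod 16)) ^ 4 = 16 * (C : ZMod 16) ^ 4 := by ring
          have h16 : (16 : ZMod 16) = 0 := by decide
          rw [zmod16_odd4, hb4, hc4, h16, zero_mul, zero_mul] at hcast16
          have : ((v : ZMod 16)) ^ 2 = 15 := by linear_combination hcast16 - h16
          exact zmod16_sq15 _ this
      · -- b even, c odd : the surviving case — main argument
        -- Step 5 : 3 ∤ b
        by_cases h3b : (3 : ℤ) ∣ b
        · obtain ⟨b₁, rfl⟩ := h3b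
          -- mod 3 : 3 ∣ v, 3 ∣ x
          have hcast3 : ((v : ZMod 3)) ^ 2 + ((x : ZMod 3)) ^ 4 = 0 := by
            have h0 := congrArg (fun t : ℤ => (t : ZMod 3)) keyN
            push_cast at h0
            have h3 : (3 : ZMod 3) = 0 := by decide
            linear_combination h0 + (375 * ((c : ZMod 3)) ^ 4 - 3375 * ((b₁ : ZMod 3)) ^ 4) * h3
          obtain ⟨hv0, hx03⟩ := zmod3_lemma _ _ hcast3
          have hv3 : (3 : ℤ) ∣ v := by
            have h := (ZMod.intCast_zmod_eq_zero_iff_dvd v 3).mp hv0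
            exact_mod_cast h
          have hx3 : (3 : ℤ) ∣ x := by
            have h := (ZMod.intCast_zmod_eq_zero_iff_dvd x 3).mp hx03
            exact_mod_cast h
          obtain ⟨v₁, rfl⟩ := hv3
          obtain ⟨x₁, hx₁⟩ := hx3
          have heq9 : v₁ ^ 2 + 9 * x₁ ^ 4 = 125 * (c ^ 4 - 9 * b₁ ^ 4) := by
            have h9 : (9 : ℤ) * (v₁ ^ 2 + 9 * x₁ ^ 4) = 9 * (125 * (c ^ 4 - 9 * b₁ ^ 4)) := by
              rw [hx₁] at keyN
              linear_combination keyN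
            exact mul_left_cancel₀ (by norm_num : (9 : ℤ) ≠ 0) h9
          by_cases h3c : (3 : ℤ) ∣ c
          · -- descend by 3
            obtain ⟨c₁, hc₁⟩ := h3c
            have hy3 : 5 * (3 * b₁) = 3 * (5 * b₁) := by ring
            have hz3 : 5 * c = 3 * (5 * c₁) := by rw [hc₁]; ring
            obtain ⟨w₁, heq₁⟩ := descend_w h3Z hx₁ hy3 hz3 heq
            have hnz₁ : ¬(x₁ = 0 ∧ 5 * b₁ = 0 ∧ 5 * c₁ = 0) := by
              rintro ⟨rfl, hB0, hC0⟩
              have hB' : b₁ = 0 := by omega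
              have hC' : c₁ = 0 := by omega
              exact hnz ⟨by omega, by omega, by omega⟩
            apply IH (x₁.natAbs + (5 * b₁).natAbs + (5 * c₁).natAbs) _ w₁ x₁ (5 * b₁) (5 * c₁)
              rfl heq₁ hnz₁
            have e1 : x.natAbs = 3 * x₁.natAbs := by rw [hx₁, Int.natAbs_mul]; rfl
            have e2 : (5 * (3 * b₁)).natAbs = 3 * (5 * b₁).natAbs := by
              have : 5 * (3 * b₁) = 3 * (5 * b₁) := by ring
              rw [this, Int.natAbs_mul]; rfl
            have e3 : (5 * c).natAbs = 3 * (5 * c₁).natAbs := by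
              rw [hz3, Int.natAbs_mul]; rfl
            have hpos : x₁.natAbs + (5 * b₁).natAbs + (5 * c₁).natAbs ≠ 0 := by
              intro h0
              apply hnz₁
              refine ⟨?_, ?_, ?_⟩ <;> rw [← Int.natAbs_eq_zero] <;> omega
            omega
          · -- 3 ∤ c : contradiction mod 3
            exfalso
            have hcast3' : ((v₁ : ZMod 3)) ^ 2 = 2 * ((c : ZMod 3)) ^ 4 := by
              have h0 := congrArg (fun t : ℤ => (t : ZMod 3)) heq9
              push_cast at h0
              have h3 : (3 : ZMod 3) = 0 := by decide
              linear_combination h0 + (41 * ((c : ZMod 3)) ^ 4 - 3 * ((x₁ : ZMod 3)) ^ 4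
                - 375 * ((b₁ : ZMod 3)) ^ 4) * h3
            have hC0 := zmod3_lemma2 _ _ hcast3'
            apply h3c
            have h := (ZMod.intCast_zmod_eq_zero_iff_dvd c 3).mp hC0
            exact_mod_cast h
        · -- 3 ∤ b : final contradiction via multiplicities
          have hcne : c ≠ 0 := by rintro rfl; omega
          set Q : ℤ := 3 * c ^ 2 + b ^ 2 with hQdef
          have hQpos : 0 < Q := by positivity
          have hQmod : Q % 4 = 3 := by
            have hQval : Q = 4 * (3 * C ^ 2 + 3 * C + B * B) + 3 := by
              rw [hQdef, hB, hC]; ring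
            omega
          have hQnat : Q.natAbs % 4 = 3 := by omega
          obtain ⟨p, pp, pp4, podd⟩ := exists_odd_multiplicity Q.natAbs hQnat
          have hpdvd : (p : ℤ) ∣ Q := by
            have hd : p ∣ Q.natAbs := by
              by_contra hnd
              rw [Nat.factorization_eq_zero_of_not_dvd hnd] at podd
              simpa using podd
            exact Int.dvd_natAbs.mp (Int.natCast_dvd_natCast.mpr hd)
          have hp3 : p ≠ 3 := by
            rintro rfl
            apply h3b
            have h3Q : (3 : ℤ) ∣ b ^ 2 := by
              have : b ^ 2 = Q - 3 * c ^ 2 := by rw [hQdef]; ring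
              rw [this]
              exact dvd_sub (by exact_mod_cast hpdvd) ⟨c ^ 2, by ring⟩
            exact h3Z.dvd_of_dvd_pow h3Q
          have heven := keyK pp pp4 hp3 Q.natAbs v x b c hx0 keyN rfl
          exact (Nat.not_odd_iff_even.mpr heven) podd
    · rcases Int.even_or_odd c with ⟨C, hC⟩ | ⟨C, hC⟩
      · -- b odd, c even : contradiction mod 16
        exfalso
        have hbx : (b : ZMod 16) = 2 * (B : ZMod 16) + 1 := by
          rw [hB]; push_cast; ring
        have hcx : (c : ZMod 16) = 2 * (C : ZMod 16) := by
          rw [hC]; push_cast; ring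
        rw [hbx, hcx] at hcast16
        have hc4 : (2 * (C : ZMod 16)) ^ 4 = 16 * (C : ZMod 16) ^ 4 := by ring
        have h16 : (16 : ZMod 16) = 0 := by decide
        rw [zmod16_odd4, hc4, h16, zero_mul] at hcast16
        have : ((v : ZMod 16)) ^ 2 + ((x : ZMod 16)) ^ 4 = 3 := by
          rw [hcast16]; decide
        exact zmod16_lhs3 _ _ this
      · -- b odd, c odd : contradiction mod 16
        exfalso
        have hbx : (b : ZMod 16) = 2 * (B : ZMod 16) + 1 := by
          rw [hB]; push_cast; ring
        have hcx : (c : ZMod 16) = 2 * (C : ZMod 16) + 1 := by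
          rw [hC]; push_cast; ring
        rw [hbx, hcx] at hcast16
        rw [zmod16_odd4, zmod16_odd4] at hcast16
        have : ((v : ZMod 16)) ^ 2 + ((x : ZMod 16)) ^ 4 = 8 := by
          rw [hcast16]; decide
        exact zmod16_lhs8 _ _ this

/-- The equation `w² = −25x⁴ − 5y⁴ + 45z⁴` has no rational solution with
`(x, y, z) ≠ (0, 0, 0)`. -/
theorem no_rational_points_minus25_minus5_45 :
    ¬ ∃ w x y z : ℚ, w ^ 2 = -25 * x ^ 4 - 5 * y ^ 4 + 45 * z ^ 4 ∧
      (x, y, z) ≠ (0, 0, 0) := by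
  rintro ⟨w, x, y, z, heq, hne⟩
  have hxden : ((x.den : ℚ)) ≠ 0 := by exact_mod_cast x.den_ne_zero
  have hyden : ((y.den : ℚ)) ≠ 0 := by exact_mod_cast y.den_ne_zero
  have hzden : ((z.den : ℚ)) ≠ 0 := by exact_mod_cast z.den_ne_zero
  have hxmul : (x : ℚ) * (x.den : ℚ) = (x.num : ℚ) := by
    nth_rewrite 1 [← Rat.num_div_den x]
    exact div_mul_cancel₀ _ hxden
  have hymul : (y : ℚ) * (y.den : ℚ) = (y.num : ℚ) := by
    nth_rewrite 1 [← Rat.num_div_den y]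
    exact div_mul_cancel₀ _ hyden
  have hzmul : (z : ℚ) * (z.den : ℚ) = (z.num : ℚ) := by
    nth_rewrite 1 [← Rat.num_div_den z]
    exact div_mul_cancel₀ _ hzden
  set X : ℤ := x.num * (y.den : ℤ) * (z.den : ℤ) with hXdef
  set Y : ℤ := y.num * (x.den : ℤ) * (z.den : ℤ) with hYdef
  set Z : ℤ := z.num * (x.den : ℤ) * (y.den : ℤ) with hZdef
  set N : ℚ := (x.den : ℚ) * (y.den : ℚ) * (z.den : ℚ) with hNdef
  have hX : (X : ℚ) = x * N := by
    rw [hXdef, hNdef]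
    push_cast
    linear_combination ((y.den : ℚ) * (z.den : ℚ)) * hxmul.symm
  have hY : (Y : ℚ) = y * N := by
    rw [hYdef, hNdef]
    push_cast
    linear_combination ((x.den : ℚ) * (z.den : ℚ)) * hymul.symm
  have hZ : (Z : ℚ) = z * N := by
    rw [hZdef, hNdef]
    push_cast
    linear_combination ((x.den : ℚ) * (y.den : ℚ)) * hzmul.symm
  set W : ℚ := w * N ^ 2 with hWdef
  have hW2 : W ^ 2 = ((-25 * X ^ 4 - 5 * Y ^ 4 + 45 * Z ^ 4 : ℤ) : ℚ) := by
    push_cast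
    rw [hX, hY, hZ, hWdef]
    linear_combination (N : ℚ) ^ 4 * heq
  have hWden : W.den = 1 := by
    have h1 : (W * W).den = 1 := by
      have hWW : W * W = ((-25 * X ^ 4 - 5 * Y ^ 4 + 45 * Z ^ 4 : ℤ) : ℚ) := by
        rw [← hW2]; ring
      rw [hWW, Rat.den_intCast]
    rw [Rat.mul_self_den] at h1
    have := Nat.eq_one_of_mul_eq_one_right h1
    omega
  have hWint : ((W.num : ℚ)) = W := Rat.coe_int_num_of_den_eq_one hWden
  have heqZ : W.num ^ 2 = -25 * X ^ 4 - 5 * Y ^ 4 + 45 * Z ^ 4 := by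
    have hcast : ((W.num ^ 2 : ℤ) : ℚ) = ((-25 * X ^ 4 - 5 * Y ^ 4 + 45 * Z ^ 4 : ℤ) : ℚ) := by
      rw [← hW2]
      push_cast
      rw [hWint]
    exact_mod_cast hcast
  have hnz : ¬(X = 0 ∧ Y = 0 ∧ Z = 0) := by
    rintro ⟨hX0, hY0, hZ0⟩
    apply hne
    have hyz : ((y.den : ℤ)) ≠ 0 := by exact_mod_cast y.den_ne_zero
    have hxz : ((x.den : ℤ)) ≠ 0 := by exact_mod_cast x.den_ne_zero
    have hzz : ((z.den : ℤ)) ≠ 0 := by exact_mod_cast z.den_ne_zero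
    have hx0 : x = 0 := by
      rw [hXdef] at hX0
      rcases mul_eq_zero.mp hX0 with h | h
      · rcases mul_eq_zero.mp h with h' | h'
        · exact Rat.num_eq_zero.mp h'
        · exact absurd h' hyz
      · exact absurd h hzz
    have hy0 : y = 0 := by
      rw [hYdef] at hY0
      rcases mul_eq_zero.mp hY0 with h | h
      · rcases mul_eq_zero.mp h with h' | h'
        · exact Rat.num_eq_zero.mp h'
        · exact absurd h' hxz
      · exact absurd h hzz
    have hz0 : z = 0 := by
      rw [hZdef] at hZ0
      rcases mul_eq_zero.mp hZ0 with h | h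
      · rcases mul_eq_zero.mp h with h' | h'
        · exact Rat.num_eq_zero.mp h'
        · exact absurd h' hxz
      · exact absurd h hyz
    rw [hx0, hy0, hz0]
  exact core (X.natAbs + Y.natAbs + Z.natAbs) W.num X Y Z rfl heqZ hnz
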